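/- The number of $t$-subsets $\{i_1 < i_2 < \cdots < i_t\}$ of $\{1,2,\ldots,n\}$ satisfying $i_j \geq 2j$ for all $j = 1, \ldots, t$ equals $\binom{n}{t} - \binom{n}{t-1}$, provided $t \leq n/2$. -/

import Mathlib

/-- Binomial coefficient with integer lower index, zero when the lower index is negative. -/
def ichoose (n : ℕ) (j : ℤ) : ℤ := if 0 ≤ j then (n.choose j.toNat : ℤ) else 0

/-- The list of elements of a subset of `Fin n`, in increasing order, renumbered as
elements of `{1, …, n}`. -/
def sortedVals {n : ℕ} (s : Finset (Fin n)) : List ℕ :=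
  (s.sort (· ≤ ·)).map (fun i => (i : ℕ) + 1)

/-- A `t`-subset `{i₁ < i₂ < ⋯ < i_t}` of `{1, …, n}` has rank `t` iff `i_j ≥ 2j` for all `j`. -/
def IsFullRank {n : ℕ} (s : Finset (Fin n)) : Prop :=
  ∀ j < s.card, 2 * (j + 1) ≤ (sortedVals s).getD j 0

noncomputable instance {n : ℕ} : DecidablePred (@IsFullRank n) := Classical.decPred _

open Finset

lemma ichoose_natCast (n k : ℕ) : ichoose n (k : ℤ) = (n.choose k : ℤ) := by
  simp [ichoose]

lemma ichoose_pascal (n : ℕ) (j : ℤ) :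
    ichoose (n + 1) j = ichoose n j + ichoose n (j - 1) := by
  unfold ichoose
  rcases lt_trichotomy j 0 with hj | rfl | hj
  · rw [if_neg (by omega), if_neg (by omega), if_neg (by omega)]; ring
  · norm_num
  · rw [if_pos (by omega), if_pos (by omega), if_pos (by omega)]
    obtain ⟨k, rfl⟩ : ∃ k : ℕ, j = (k : ℤ) + 1 := ⟨(j - 1).toNat, by omega⟩
    have h1 : ((k : ℤ) + 1).toNat = k + 1 := by omega
    have h2 : ((k : ℤ) + 1 - 1).toNat = k := by omega
    rw [h1, h2, Nat.choose_succ_succ]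
    push_cast; ring

lemma sortedVals_eq {n : ℕ} (s : Finset (Fin n)) :
    sortedVals s = (s.sort (· ≤ ·)).map (fun i => i.val + 1) := by
  unfold sortedVals
  induction (s.sort (· ≤ ·)) with
  | nil => rfl
  | cons a l ih => simp_all [List.flatMap_cons]

open scoped List in
lemma sort_insert_max {n : ℕ} {s : Finset (Fin n)} {a : Fin n}
    (hmax : ∀ b ∈ s, b < a) (ha : a ∉ s) :
    (insert a s).sort (· ≤ ·) = s.sort (· ≤ ·) ++ [a] := by
  refine (fun hp h1 h2 => List.Perm.eq_of_pairwise' h1 h2 hp) ?_ (Finset.pairwise_sort _ _) ?_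
  · calc (insert a s).sort (· ≤ ·)
        ~ (insert a s).toList := Finset.sort_perm_toList _ _
      _ ~ a :: s.toList := Finset.toList_insert ha
      _ ~ a :: s.sort (· ≤ ·) := List.Perm.cons a (Finset.sort_perm_toList _ _).symm
      _ ~ s.sort (· ≤ ·) ++ [a] := (List.perm_append_singleton a _).symm
  · rw [List.pairwise_append]
    refine ⟨Finset.pairwise_sort _ _, List.pairwise_singleton _ _, ?_⟩
    intro x hx y hy
    simp only [List.mem_singleton] at hy
    subst hy
    exact (hmax x (by simpa using hx)).le

lemma sort_map_castSucc {n : ℕ} (s : Finset (Fin n)) :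
    ((s.map Fin.castSuccEmb).sort (· ≤ ·)) = (s.sort (· ≤ ·)).map Fin.castSucc := by
  refine (fun hp h1 h2 => List.Perm.eq_of_pairwise' h1 h2 hp) ?_ (Finset.pairwise_sort _ _) ?_
  · rw [← Multiset.coe_eq_coe, Finset.sort_eq, Finset.map_val]
    have h : s.1 = ↑(s.sort (· ≤ ·)) := (Finset.sort_eq _ _).symm
    rw [h, Multiset.map_coe]
    rfl
  · refine List.Pairwise.map _ ?_ (Finset.pairwise_sort s (· ≤ ·))
    intro a b hab
    simpa using hab

lemma sortedVals_map {n : ℕ} (s : Finset (Fin n)) :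
    sortedVals (s.map Fin.castSuccEmb) = sortedVals s := by
  rw [sortedVals_eq, sortedVals_eq, sort_map_castSucc, List.map_map]
  simp [Function.comp_def]

lemma sortedVals_insert_last {n : ℕ} (s : Finset (Fin (n + 1))) (h : Fin.last n ∉ s) :
    sortedVals (insert (Fin.last n) s) = sortedVals s ++ [n + 1] := by
  rw [sortedVals_eq, sortedVals_eq,
    sort_insert_max (fun b hb => lt_of_le_of_ne (Fin.le_last b)
      (by rintro rfl; exact h hb)) h, List.map_append]
  simp

lemma length_sortedVals {n : ℕ} (s : Finset (Fin n)) : (sortedVals s).length = s.card := by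
  rw [sortedVals_eq]; simp

lemma mem_sortedVals_le {n : ℕ} {s : Finset (Fin n)} {x : ℕ} (hx : x ∈ sortedVals s) : x ≤ n := by
  rw [sortedVals_eq] at hx
  simp only [List.mem_map, Finset.mem_sort] at hx
  obtain ⟨i, _, rfl⟩ := hx
  exact i.isLt

lemma isFullRank_empty {n : ℕ} : IsFullRank (∅ : Finset (Fin n)) := by
  intro j hj
  simp at hj

lemma isFullRank_map {n : ℕ} (s : Finset (Fin n)) :
    IsFullRank (s.map Fin.castSuccEmb) ↔ IsFullRank s := by
  unfold IsFullRank
  rw [sortedVals_map, Finset.card_map]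

lemma last_not_mem_map {n : ℕ} (s : Finset (Fin n)) : Fin.last n ∉ s.map Fin.castSuccEmb := by
  intro hmem
  obtain ⟨a, _, ha⟩ := Finset.mem_map.1 hmem
  have h1 : ((Fin.castSuccEmb a : Fin (n + 1)) : ℕ) = n := by rw [ha]; simp
  have h2 : ((Fin.castSuccEmb a : Fin (n + 1)) : ℕ) = (a : ℕ) := by simp
  have := a.isLt
  omega

lemma isFullRank_insert_last {n : ℕ} {s : Finset (Fin (n + 1))} (h : Fin.last n ∉ s) :
    IsFullRank (insert (Fin.last n) s) ↔ IsFullRank s ∧ 2 * (s.card + 1) ≤ n + 1 := by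
  unfold IsFullRank
  rw [Finset.card_insert_of_notMem h, sortedVals_insert_last s h]
  constructor
  · intro H
    refine ⟨fun j hj => ?_, ?_⟩
    · have := H j (by omega)
      rwa [List.getD_append _ _ _ _ (by rw [length_sortedVals]; omega)] at this
    · have := H s.card (by omega)
      rwa [List.getD_append_right _ _ _ _ (by rw [length_sortedVals]),
        length_sortedVals, Nat.sub_self] at this
  · rintro ⟨H, hc⟩ j hj
    rcases lt_or_eq_of_le (Nat.lt_succ_iff.1 hj) with hj' | rfl
    · rw [List.getD_append _ _ _ _ (by rw [length_sortedVals]; omega)]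
      exact H j hj'
    · rw [List.getD_append_right _ _ _ _ (by rw [length_sortedVals]),
        length_sortedVals, Nat.sub_self]
      simpa using hc

/-- Number of full-rank `t`-subsets of `{1, …, n}`. -/
noncomputable def NFR (n t : ℕ) : ℕ :=
  (Finset.univ.filter fun s : Finset (Fin n) => s.card = t ∧ IsFullRank s).card

lemma natCard_eq_NFR (n t : ℕ) :
    Nat.card {s : Finset (Fin n) // s.card = t ∧ IsFullRank s} = NFR n t := by
  rw [Nat.card_eq_fintype_card, Fintype.card_subtype]
  rfl

lemma NFR_t_zero (n : ℕ) : NFR n 0 = 1 := by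
  unfold NFR
  rw [Finset.card_eq_one]
  refine ⟨∅, ?_⟩
  ext s
  simp only [Finset.mem_filter, Finset.mem_univ, true_and, Finset.mem_singleton,
    Finset.card_eq_zero]
  constructor
  · rintro ⟨rfl, -⟩; rfl
  · rintro rfl; exact ⟨rfl, isFullRank_empty⟩

lemma NFR_eq_zero {n t : ℕ} (ht : 1 ≤ t) (h : n < 2 * t) : NFR n t = 0 := by
  unfold NFR
  rw [Finset.card_eq_zero, Finset.filter_eq_empty_iff]
  rintro s -
  rintro ⟨hc, hfr⟩
  have h1 := hfr (t - 1) (by omega)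
  have hlen : t - 1 < (sortedVals s).length := by rw [length_sortedVals, hc]; omega
  rw [List.getD_eq_getElem _ _ hlen] at h1
  have h2 : (sortedVals s)[t - 1] ≤ n := mem_sortedVals_le (List.getElem_mem _)
  omega

lemma card_filter_not_mem_last (n t : ℕ) :
    (Finset.univ.filter fun s : Finset (Fin (n + 1)) =>
      (s.card = t ∧ IsFullRank s) ∧ Fin.last n ∉ s).card = NFR n t := by
  unfold NFR
  refine (Finset.card_bij (fun s _ => s.map Fin.castSuccEmb) ?_ ?_ ?_).symm
  · intro s hs
    simp only [Finset.mem_filter, Finset.mem_univ, true_and] at hs ⊢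
    exact ⟨⟨by rw [Finset.card_map]; exact hs.1, (isFullRank_map s).2 hs.2⟩,
      last_not_mem_map s⟩
  · intro a _ b _ hab
    exact Finset.map_injective _ hab
  · intro b hb
    simp only [Finset.mem_filter, Finset.mem_univ, true_and] at hb
    obtain ⟨⟨hcard, hfr⟩, hlast⟩ := hb
    have hsub : b ⊆ Finset.univ.map Fin.castSuccEmb := by
      intro x hx
      rw [Finset.mem_map]
      refine ⟨x.castPred (by rintro rfl; exact hlast hx), Finset.mem_univ _, ?_⟩
      exact Fin.ext (by simp [Fin.castPred])
    obtain ⟨u, -, rfl⟩ := Finset.subset_map_iff.1 hsub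
    refine ⟨u, ?_, rfl⟩
    simp only [Finset.mem_filter, Finset.mem_univ, true_and]
    rw [Finset.card_map] at hcard
    exact ⟨hcard, (isFullRank_map u).1 hfr⟩

lemma card_filter_mem_last (n u : ℕ) (h : 2 * (u + 1) ≤ n + 1) :
    (Finset.univ.filter fun s : Finset (Fin (n + 1)) =>
      (s.card = u + 1 ∧ IsFullRank s) ∧ Fin.last n ∈ s).card = NFR n u := by
  unfold NFR
  refine (Finset.card_bij (fun s _ => insert (Fin.last n) (s.map Fin.castSuccEmb)) ?_ ?_ ?_).symm
  · intro s hs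
    simp only [Finset.mem_filter, Finset.mem_univ, true_and] at hs ⊢
    have hnm := last_not_mem_map s
    refine ⟨⟨?_, ?_⟩, Finset.mem_insert_self _ _⟩
    · rw [Finset.card_insert_of_notMem hnm, Finset.card_map, hs.1]
    · rw [isFullRank_insert_last hnm]
      refine ⟨(isFullRank_map s).2 hs.2, ?_⟩
      rw [Finset.card_map, hs.1]
      exact h
  · intro a _ b _ hab
    have hab' : insert (Fin.last n) (a.map Fin.castSuccEmb)
        = insert (Fin.last n) (b.map Fin.castSuccEmb) := hab
    have h2 : (insert (Fin.last n) (a.map Fin.castSuccEmb)).erase (Fin.last n)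
        = (insert (Fin.last n) (b.map Fin.castSuccEmb)).erase (Fin.last n) := by rw [hab']
    rw [Finset.erase_insert (last_not_mem_map a), Finset.erase_insert (last_not_mem_map b)] at h2
    exact Finset.map_injective _ h2
  · intro b hb
    simp only [Finset.mem_filter, Finset.mem_univ, true_and] at hb
    obtain ⟨⟨hcard, hfr⟩, hlast⟩ := hb
    set b' := b.erase (Fin.last n) with hb'
    have hnotmem : Fin.last n ∉ b' := Finset.notMem_erase _ _
    have hins : insert (Fin.last n) b' = b := Finset.insert_erase hlast
    have hsub : b' ⊆ Finset.univ.map Fin.castSuccEmb := by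
      intro x hx
      rw [Finset.mem_map]
      have hxne : x ≠ Fin.last n := by rintro rfl; exact hnotmem hx
      exact ⟨x.castPred hxne, Finset.mem_univ _, Fin.ext (by simp [Fin.castPred])⟩
    obtain ⟨v, -, hv⟩ := Finset.subset_map_iff.1 hsub
    refine ⟨v, ?_, ?_⟩
    swap
    · show insert (Fin.last n) (v.map Fin.castSuccEmb) = b
      rw [← hv, hins]
    simp only [Finset.mem_filter, Finset.mem_univ, true_and]
    have hfr' : IsFullRank b' := by
      rw [← hins, isFullRank_insert_last hnotmem] at hfr
      exact hfr.1
    have hcard' : b'.card = u := by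
      rw [hb', Finset.card_erase_of_mem hlast, hcard]
      omega
    constructor
    · have h3 := hcard'
      rw [hv, Finset.card_map] at h3
      exact h3
    · rw [hv] at hfr'
      exact (isFullRank_map v).1 hfr'

lemma NFR_succ (n u : ℕ) (h : 2 * (u + 1) ≤ n + 1) :
    NFR (n + 1) (u + 1) = NFR n (u + 1) + NFR n u := by
  have key := Finset.card_filter_add_card_filter_not
    (s := Finset.univ.filter fun s : Finset (Fin (n + 1)) => s.card = u + 1 ∧ IsFullRank s)
    (p := fun s : Finset (Fin (n + 1)) => Fin.last n ∈ s)
  rw [Finset.filter_filter, Finset.filter_filter] at key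
  have h1 := card_filter_mem_last n u h
  have h2 := card_filter_not_mem_last (n := n) (t := u + 1)
  show (Finset.univ.filter fun s : Finset (Fin (n + 1)) =>
      s.card = u + 1 ∧ IsFullRank s).card = _
  rw [← key, h1, h2]
  omega

lemma key_count (n : ℕ) : ∀ t : ℕ, 2 * t ≤ n + 1 →
    ((NFR n t : ℤ) = ichoose n (t : ℤ) - ichoose n ((t : ℤ) - 1)) := by
  induction n with
  | zero =>
    intro t ht
    obtain rfl : t = 0 := by omega
    rw [NFR_t_zero]
    simp [ichoose]
  | succ n ih =>
    intro t ht
    match t with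
    | 0 =>
      rw [NFR_t_zero]
      simp [ichoose]
    | u + 1 =>
      by_cases h2 : 2 * (u + 1) ≤ n + 1
      · rw [NFR_succ n u h2]
        have e1 := ih (u + 1) h2
        have e2 := ih u (by omega)
        push_cast at e1 e2 ⊢
        rw [ichoose_pascal, ichoose_pascal]
        have r1 : (u : ℤ) + 1 - 1 = (u : ℤ) := by ring
        have r2 : (u : ℤ) + 1 - 1 - 1 = (u : ℤ) - 1 := by ring
        rw [r1] at e1
        rw [r1]
        try rw [r2]
        linarith [e1, e2]
      · have hn : n + 2 = 2 * (u + 1) := by omega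
        rw [NFR_eq_zero (by omega) (by omega)]
        have hch : (n + 1).choose (u + 1) = (n + 1).choose u := by
          rw [← Nat.choose_symm (show u + 1 ≤ n + 1 by omega)]
          congr 1
          omega
        have c1 : ichoose (n + 1) ((u : ℤ) + 1) = ((n + 1).choose (u + 1) : ℤ) := by
          rw [show ((u : ℤ) + 1) = ((u + 1 : ℕ) : ℤ) by push_cast; ring, ichoose_natCast]
        have c2 : ichoose (n + 1) (u : ℤ) = ((n + 1).choose u : ℤ) := ichoose_natCast _ _
        push_cast
        rw [show ((u : ℤ) + 1 - 1) = (u : ℤ) by ring, c1, c2, hch]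
        ring

theorem stmt0 (n t : ℕ) (h : 2 * t ≤ n) :
    (Nat.card {s : Finset (Fin n) // s.card = t ∧ IsFullRank s} : ℤ) =
      ichoose n (t : ℤ) - ichoose n ((t : ℤ) - 1) := by
  rw [natCard_eq_NFR]
  exact key_count n t (by omega)
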